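/- Let x be an isolated point of supp(μ) and suppose the Nevai condition holds at x: for every bounded continuous f, (1/K_n(x,x)) ∫ K_n(x,y) K_n(y,x) f(y) dμ(y) → f(x), where K_n(x,x) ≠ 0 for large n. Then lim_{n→∞} K_n(x,x) = 1/μ({x}). -/

import Mathlib

open MeasureTheory Filter

/-- The Christoffel--Darboux kernel of biorthogonal sequences. -/
noncomputable def CDkernel (p q : ℕ → ℝ → ℝ) (n : ℕ) (x y : ℝ) : ℝ :=
  ∑ j ∈ Finset.range n, p j x * q j y

/-- Let `x` be an isolated point of `supp(μ)` (i.e. `μ({x}) > 0` and some punctured interval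
`[x−ε, x+ε] \ {x}` is `μ`-null). If the Nevai condition holds at `x`, i.e.
`(1/K_n(x,x)) ∫ K_n(x,y) K_n(y,x) f(y) dμ(y) → f(x)` for every bounded continuous `f`, and
`K_n(x,x) ≠ 0` for large `n`, then `K_n(x,x) → 1/μ({x})`. -/
theorem CD_diagonal_limit_at_isolated_point (μ : Measure ℝ) [IsFiniteMeasure μ]
    (p q : ℕ → ℝ → ℝ) (x : ℝ)
    (hatom : 0 < μ {x})
    (hisolated : ∃ ε : ℝ, 0 < ε ∧ μ (Set.Icc (x - ε) (x + ε) \ {x}) = 0)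
    (hne : ∃ n₀ : ℕ, ∀ n : ℕ, n₀ ≤ n → CDkernel p q n x x ≠ 0)
    (hnevai : ∀ f : ℝ → ℝ, Continuous f → (∃ C : ℝ, ∀ y : ℝ, |f y| ≤ C) →
      Tendsto (fun n : ℕ =>
          (∫ y, CDkernel p q n x y * CDkernel p q n y x * f y ∂μ) / CDkernel p q n x x)
        atTop (nhds (f x))) :
    Tendsto (fun n : ℕ => CDkernel p q n x x) atTop (nhds (1 / (μ {x}).toReal)) := by
  obtain ⟨ε, hε, hnull⟩ := hisolated
  obtain ⟨n₀, hn₀⟩ := hne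
  set m : ℝ := (μ {x}).toReal with hm
  have hmpos : 0 < m := ENNReal.toReal_pos hatom.ne' (measure_ne_top μ _)
  -- the bump function
  set f : ℝ → ℝ := fun y => max 0 (1 - |y - x| / ε) with hf
  have hfcont : Continuous f := by
    apply Continuous.max continuous_const
    continuity
  have hfx : f x = 1 := by simp [hf]
  have hfbd : ∃ C : ℝ, ∀ y : ℝ, |f y| ≤ C := by
    refine ⟨1, fun y => ?_⟩
    rw [abs_of_nonneg (le_max_left _ _)]
    apply max_le (by norm_num)
    have : 0 ≤ |y - x| / ε := div_nonneg (abs_nonneg _) hε.le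
    linarith
  -- f vanishes outside [x-ε, x+ε]
  have hfzero : ∀ y : ℝ, y ∉ Set.Icc (x - ε) (x + ε) → f y = 0 := by
    intro y hy
    have h : ε ≤ |y - x| := by
      rcases abs_cases (y - x) with ⟨h1, h2⟩ | ⟨h1, h2⟩ <;>
      · simp only [Set.mem_Icc, not_and_or, not_le] at hy
        rcases hy with h | h <;> [linarith; linarith]
    have : (1 : ℝ) ≤ |y - x| / ε := (one_le_div hε).mpr h
    simp only [hf, max_eq_left_iff]
    linarith
  -- the key integral computation
  have hint : ∀ n : ℕ,
      (∫ y, CDkernel p q n x y * CDkernel p q n y x * f y ∂μ)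
        = CDkernel p q n x x * CDkernel p q n x x * m := by
    intro n
    set g : ℝ → ℝ := fun y => CDkernel p q n x y * CDkernel p q n y x * f y with hg
    have hae : g =ᵐ[μ] Set.indicator {x} (fun _ => g x) := by
      refine Filter.eventuallyEq_of_mem (compl_mem_ae_iff.mpr hnull) ?_
      intro y hy
      simp only [Set.mem_compl_iff, Set.mem_diff, not_and_or, not_not] at hy
      rcases hy with hy | hy
      · have hyx : y ≠ x := by
          rintro rfl
          exact hy (by simp [Set.mem_Icc]; linarith)
        simp [hg, hfzero y hy, Set.indicator_apply, hyx]
      · simp only [Set.mem_singleton_iff] at hy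
        simp [hy, Set.indicator_apply]
    rw [integral_congr_ae hae, integral_indicator_const _ (measurableSet_singleton x)]
    simp [hg, hfx, hm]
    unfold Measure.real
    ring
  -- conclude
  have hnev := hnevai f hfcont hfbd
  rw [hfx] at hnev
  have heq : ∀ᶠ n in atTop, (∫ y, CDkernel p q n x y * CDkernel p q n y x * f y ∂μ) /
      CDkernel p q n x x = CDkernel p q n x x * m := by
    filter_upwards [eventually_ge_atTop n₀] with n hn
    rw [hint n]
    field_simp [hn₀ n hn]
  have h1 : Tendsto (fun n : ℕ => CDkernel p q n x x * m) atTop (nhds 1) :=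
    hnev.congr' heq
  have h2 := h1.mul_const m⁻¹
  simp only [one_mul] at h2
  rw [one_div]; refine h2.congr ?_
  intro n
  rw [mul_assoc, mul_inv_cancel₀ hmpos.ne', mul_one]
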